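/- Let m ≥ 1 and i ≥ 2 be integers. Let (Ω, F, ℙ) be a probability space with a filtration (F_t)_{t≥i} and let (d_t)_{t≥i} be an adapted, integrable, nonnegative process such that for every t ≥ i, E[d_{t+1} | F_t] = d_t·(1 - e_t) + m·c_t almost surely. Then for every fixed real s > 1, d_t / ( ∑_{l=i}^{t-1} ln(1 + c_l) )^s → 0 almost surely as t → ∞. -/

import Mathlib

open Filter MeasureTheory

/-- `c_l = (2ml+1)/(l(2ml+1-2m))`. -/
noncomputable def cPAAPA (m l : ℕ) : ℝ :=
  (2 * (m : ℝ) * l + 1) / ((l : ℝ) * (2 * (m : ℝ) * l + 1 - 2 * m))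

/-- `e_l = m/(l(2ml+1-2m))`. -/
noncomputable def ePAAPA (m l : ℕ) : ℝ :=
  (m : ℝ) / ((l : ℝ) * (2 * (m : ℝ) * l + 1 - 2 * m))


section facts
variable {m l : ℕ} (hm : 1 ≤ m) (hl : 2 ≤ l)
include hm hl

lemma den_pos : 0 < (l : ℝ) * (2 * (m : ℝ) * l + 1 - 2 * m) := by
  have hM : (1:ℝ) ≤ m := by exact_mod_cast hm
  have hL : (2:ℝ) ≤ l := by exact_mod_cast hl
  have h1 : (1:ℝ)*1 ≤ (m:ℝ) * ((l:ℝ) - 1) := by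
    apply mul_le_mul hM (by linarith) (by norm_num) (by linarith)
  nlinarith

lemma c_pos : 0 < cPAAPA m l := by
  have hM : (1:ℝ) ≤ m := by exact_mod_cast hm
  have hL : (2:ℝ) ≤ l := by exact_mod_cast hl
  exact div_pos (by nlinarith) (den_pos hm hl)

lemma c_le_one : cPAAPA m l ≤ 1 := by
  have hM : (1:ℝ) ≤ m := by exact_mod_cast hm
  have hL : (2:ℝ) ≤ l := by exact_mod_cast hl
  rw [cPAAPA, div_le_one (den_pos hm hl)]
  nlinarith [mul_nonneg (mul_nonneg (by linarith : (0:ℝ) ≤ 2*(m:ℝ)) (by linarith : (0:ℝ) ≤ (l:ℝ))) (by linarith : (0:ℝ) ≤ (l:ℝ)-2)]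

lemma e_nonneg : 0 ≤ ePAAPA m l := by
  have hM : (1:ℝ) ≤ m := by exact_mod_cast hm
  exact div_nonneg (by linarith) (den_pos hm hl).le

lemma e_le_one : ePAAPA m l ≤ 1 := by
  have hM : (1:ℝ) ≤ m := by exact_mod_cast hm
  have hL : (2:ℝ) ≤ l := by exact_mod_cast hl
  rw [ePAAPA, div_le_one (den_pos hm hl)]
  nlinarith [mul_le_mul hM (by linarith : (1:ℝ) ≤ (l:ℝ)-1) (by norm_num) (by linarith : (0:ℝ) ≤ (m:ℝ))]

lemma inv_le_c : ((l : ℝ))⁻¹ ≤ cPAAPA m l := by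
  have hM : (1:ℝ) ≤ m := by exact_mod_cast hm
  have hL : (2:ℝ) ≤ l := by exact_mod_cast hl
  have hL0 : (0:ℝ) < l := by linarith
  rw [inv_eq_one_div, cPAAPA, div_le_div_iff₀ hL0 (den_pos hm hl)]
  nlinarith [mul_le_mul_of_nonneg_right (show 2*(m:ℝ)*l + 1 - 2*m ≤ 2*(m:ℝ)*l+1 by linarith) hL0.le]

end facts

lemma half_le_log_one_add {x : ℝ} (hx : 0 ≤ x) (hx1 : x ≤ 1) : x / 2 ≤ Real.log (1 + x) := by
  have h1 : (0:ℝ) < 1 + x := by linarith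
  have h2 : Real.log (1+x)⁻¹ ≤ (1+x)⁻¹ - 1 := Real.log_le_sub_one_of_pos (by positivity)
  rw [Real.log_inv] at h2
  have h3 : (1+x)⁻¹ - 1 = -(x/(1+x)) := by field_simp; ring
  rw [h3] at h2
  have h4 : x / (1+x) ≤ Real.log (1+x) := by linarith
  have h5 : x / 2 ≤ x / (1+x) :=
    div_le_div_of_nonneg_left hx (by linarith) (by linarith)
  linarith

lemma tele_key {a b q : ℝ} (ha : 0 < a) (hab : a ≤ b) (hq : 0 < q) (hq1 : q ≤ 1) :
    (b - a) / b ^ (1 + q) ≤ (a ^ (-q) - b ^ (-q)) / q := by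
  have hb : 0 < b := ha.trans_le hab
  set v := a / b with hv
  have hv0 : 0 < v := div_pos ha hb
  have hv1 : v ≤ 1 := (div_le_one hb).2 hab
  have hbern : v ^ q ≤ 1 - q * (1 - v) := by
    have h := rpow_one_add_le_one_add_mul_self (s := v - 1) (by linarith) hq.le hq1
    have e : 1 + (v - 1) = v := by ring
    rw [e] at h
    linarith
  have hx : 0 ≤ q * (1 - v) := by nlinarith
  have hvq : 0 < v ^ q := Real.rpow_pos_of_pos hv0 _
  have hinv : 1 + q * (1 - v) ≤ (v ^ q)⁻¹ := by
    have hmul : (1 + q * (1 - v)) * v ^ q ≤ 1 := by nlinarith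
    rw [← one_div, le_div_iff₀ hvq]
    exact hmul
  have hvnq : v ^ (-q) = (v ^ q)⁻¹ := Real.rpow_neg hv0.le q
  have hkey : q * (1 - v) ≤ v ^ (-q) - 1 := by rw [hvnq]; linarith
  have hanq : a ^ (-q) = b ^ (-q) * v ^ (-q) := by
    rw [hv, ← Real.mul_rpow hb.le (by positivity : (0:ℝ) ≤ a/b)]
    congr 1
    field_simp
  have hbq : 0 < b ^ (-q) := Real.rpow_pos_of_pos hb _
  have h1 : b ^ (-q) * (q * (1 - v)) ≤ a ^ (-q) - b ^ (-q) := by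
    rw [hanq]
    calc b ^ (-q) * (q * (1-v)) ≤ b ^ (-q) * (v ^ (-q) - 1) :=
          mul_le_mul_of_nonneg_left hkey hbq.le
      _ = b ^ (-q) * v ^ (-q) - b ^ (-q) := by ring
  have hbb : b ^ (-q) * b ^ (1+q) = b := by
    rw [← Real.rpow_add hb, show -q + (1+q) = 1 by ring, Real.rpow_one]
  rw [div_le_div_iff₀ (Real.rpow_pos_of_pos hb _) hq]
  have e1 : b ^ (-q) * (q * (1 - v)) * b ^ (1 + q) = (b - a) * q := by
    calc b ^ (-q) * (q * (1 - v)) * b ^ (1 + q) = (q * (1-v)) * (b^(-q) * b^(1+q)) := by ring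
      _ = q * (1 - v) * b := by rw [hbb]
      _ = (b - a) * q := by rw [hv]; field_simp
  calc (b - a) * q = b ^ (-q) * (q * (1 - v)) * b ^ (1 + q) := e1.symm
    _ ≤ (a ^ (-q) - b ^ (-q)) * b ^ (1 + q) :=
        mul_le_mul_of_nonneg_right h1 (Real.rpow_pos_of_pos hb _).le

noncomputable def Ssum (m i t : ℕ) : ℝ := ∑ l ∈ Finset.Ico i t, Real.log (1 + cPAAPA m l)

section Sfacts
variable {m i : ℕ} (hm : 1 ≤ m) (hi : 2 ≤ i)
include hm hi

lemma log_term_nonneg {l : ℕ} (hl : i ≤ l) : 0 ≤ Real.log (1 + cPAAPA m l) :=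
  Real.log_nonneg (by linarith [c_pos hm (hi.trans hl)])

lemma Smono : Monotone (Ssum m i) := by
  intro a b hab
  apply Finset.sum_le_sum_of_subset_of_nonneg (Finset.Ico_subset_Ico le_rfl hab)
  intro l hl _
  exact log_term_nonneg hm hi (Finset.mem_Ico.1 hl).1

lemma Spos {t : ℕ} (ht : i < t) : 0 < Ssum m i t := by
  apply Finset.sum_pos'
  · intro l hl; exact log_term_nonneg hm hi (Finset.mem_Ico.1 hl).1
  · refine ⟨i, Finset.mem_Ico.2 ⟨le_rfl, ht⟩, Real.log_pos ?_⟩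
    linarith [c_pos hm hi]

lemma Ssucc {t : ℕ} (ht : i ≤ t) :
    Ssum m i (t + 1) = Ssum m i t + Real.log (1 + cPAAPA m t) :=
  Finset.sum_Ico_succ_top ht _

lemma Slb {t : ℕ} (ht : i ≤ t) : Real.log t - Real.log i ≤ Ssum m i t := by
  have h1 : ∀ l ∈ Finset.Ico i t, Real.log (l + 1) - Real.log l ≤ Real.log (1 + cPAAPA m l) := by
    intro l hl
    have hil : i ≤ l := (Finset.mem_Ico.1 hl).1
    have hl2 : 2 ≤ l := hi.trans hil
    have hL : (2:ℝ) ≤ l := by exact_mod_cast hl2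
    have hL0 : (0:ℝ) < l := by linarith
    have h2 : (1:ℝ) + (l:ℝ)⁻¹ ≤ 1 + cPAAPA m l := by linarith [inv_le_c hm hl2]
    calc Real.log (l + 1) - Real.log l = Real.log (((l:ℝ) + 1) / l) := by
          rw [Real.log_div (by linarith) (by linarith)]
      _ = Real.log (1 + (l:ℝ)⁻¹) := by
          congr 1; field_simp
      _ ≤ Real.log (1 + cPAAPA m l) := Real.log_le_log (by positivity) h2
  calc Real.log t - Real.log i
      = ∑ l ∈ Finset.Ico i t, (Real.log (l+1) - Real.log l) := by
        rw [Finset.sum_Ico_eq_sub _ ht]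
        have e : ∀ n : ℕ, ∑ l ∈ Finset.range n, (Real.log (l+1) - Real.log l)
            = Real.log n := by
          intro n
          have := Finset.sum_range_sub (fun l : ℕ => Real.log l) n
          simp only [Nat.cast_add, Nat.cast_one] at this ⊢
          rw [this]
          simp
        rw [e t, e i]
    _ ≤ Ssum m i t := Finset.sum_le_sum h1
end Sfacts

section Sfacts2
variable {m i : ℕ} (hm : 1 ≤ m) (hi : 2 ≤ i)
include hm hi

lemma Stop : Tendsto (Ssum m i) atTop atTop := by
  apply tendsto_atTop_mono' atTop
    (eventually_atTop.2 ⟨i, fun t ht => Slb hm hi ht⟩)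
  have h1 : Tendsto (fun t : ℕ => Real.log t) atTop atTop :=
    Real.tendsto_log_atTop.comp tendsto_natCast_atTop_atTop
  simpa [sub_eq_add_neg] using tendsto_atTop_add_const_right atTop (-Real.log i) h1

lemma gsummable {q : ℝ} (hq : 0 < q) (hq1 : q ≤ 1) :
    Summable (fun k => (m:ℝ) * cPAAPA m (k+i+1) / Ssum m i (k+i+2) ^ (1+q)) := by
  set h : ℕ → ℝ := fun k => Ssum m i (k+i+1) ^ (-q) with hh
  have hM : (0:ℝ) ≤ m := Nat.cast_nonneg m
  have hgnn : ∀ k, 0 ≤ (m:ℝ) * cPAAPA m (k+i+1) / Ssum m i (k+i+2) ^ (1+q) := by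
    intro k
    have hc := c_pos hm (show 2 ≤ k+i+1 by omega)
    have hS := Spos hm hi (show i < k+i+2 by omega)
    positivity
  have hbound : ∀ k, (m:ℝ) * cPAAPA m (k+i+1) / Ssum m i (k+i+2) ^ (1+q)
      ≤ (2*m/q) * (h k - h (k+1)) := by
    intro k
    have h2t : 2 ≤ k+i+1 := by omega
    have ha : 0 < Ssum m i (k+i+1) := Spos hm hi (by omega)
    have hab : Ssum m i (k+i+1) ≤ Ssum m i (k+i+2) := Smono hm hi (by omega)
    have hb : Ssum m i (k+i+2) = Ssum m i (k+i+1) + Real.log (1 + cPAAPA m (k+i+1)) :=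
      Ssucc hm hi (by omega)
    have hc0 := c_pos hm h2t
    have hc1 := c_le_one hm h2t
    have hlog := half_le_log_one_add hc0.le hc1
    have hkey := tele_key ha hab hq hq1
    have hbp : 0 < Ssum m i (k+i+2) := lt_of_lt_of_le ha hab
    have hbpow : 0 < Ssum m i (k+i+2) ^ (1+q) := Real.rpow_pos_of_pos hbp _
    have hk1 : h (k+1) = Ssum m i (k+i+2) ^ (-q) := by
      simp only [hh]
      congr 2
      omega
    have hk0 : h k = Ssum m i (k+i+1) ^ (-q) := rfl
    rw [hk1, hk0]
    calc (m:ℝ) * cPAAPA m (k+i+1) / Ssum m i (k+i+2) ^ (1+q)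
        ≤ 2*(m:ℝ) * Real.log (1 + cPAAPA m (k+i+1)) / Ssum m i (k+i+2) ^ (1+q) := by
          gcongr ?_ / _
          nlinarith
      _ = 2*(m:ℝ) * ((Ssum m i (k+i+2) - Ssum m i (k+i+1)) / Ssum m i (k+i+2) ^ (1+q)) := by
          rw [hb]; ring
      _ ≤ 2*(m:ℝ) * ((Ssum m i (k+i+1) ^ (-q) - Ssum m i (k+i+2) ^ (-q)) / q) :=
          mul_le_mul_of_nonneg_left hkey (by positivity)
      _ = (2*(m:ℝ)/q) * (Ssum m i (k+i+1) ^ (-q) - Ssum m i (k+i+2) ^ (-q)) := by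
          ring
  apply summable_of_sum_range_le hgnn
  intro n
  calc ∑ k ∈ Finset.range n, (m:ℝ) * cPAAPA m (k+i+1) / Ssum m i (k+i+2) ^ (1+q)
      ≤ ∑ k ∈ Finset.range n, (2*(m:ℝ)/q) * (h k - h (k+1)) :=
        Finset.sum_le_sum fun k _ => hbound k
    _ = (2*(m:ℝ)/q) * (h 0 - h n) := by
        rw [← Finset.mul_sum, Finset.sum_range_sub' h n]
    _ ≤ (2*(m:ℝ)/q) * h 0 := by
        have hn : 0 ≤ h n := Real.rpow_nonneg (Spos hm hi (by omega)).le _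
        have h2 : (0:ℝ) ≤ 2*(m:ℝ)/q := by positivity
        nlinarith

end Sfacts2

/-- Theorem 3.9 of the paper: in the pure anti-preferential attachment model the degree of
each vertex grows more slowly than `(∑_{l=i}^{t-1} ln(1+c_l))^s ∼ ln^s t` for every `s > 1`,
almost surely. -/
theorem pa_apa_pure_anti_degree_slower_than_log_pow
    {Ω : Type*} {m0 : MeasurableSpace Ω} (μ : Measure Ω) [IsProbabilityMeasure μ]
    (ℱ : Filtration ℕ m0) (m i : ℕ) (hm : 1 ≤ m) (hi : 2 ≤ i)
    (d : ℕ → Ω → ℝ) (hadapted : Adapted ℱ d)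
    (hint : ∀ t, Integrable (d t) μ)
    (hnonneg : ∀ t, 0 ≤ᵐ[μ] d t)
    (hcond : ∀ t, i ≤ t →
      μ[d (t + 1) | ℱ t] =ᵐ[μ]
        fun ω => d t ω * (1 - ePAAPA m t) + (m : ℝ) * cPAAPA m t) :
    ∀ s : ℝ, 1 < s →
      ∀ᵐ ω ∂μ, Tendsto (fun t : ℕ =>
          d t ω / (∑ l ∈ Finset.Ico i t, Real.log (1 + cPAAPA m l)) ^ s)
        atTop (nhds 0) := by
  intro s hs
  set q : ℝ := min ((s-1)/2) 1 with hqdef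
  have hq : 0 < q := lt_min (by linarith) one_pos
  have hq1 : q ≤ 1 := min_le_right _ _
  have hqs : q ≤ (s-1)/2 := min_le_left _ _
  set p : ℝ := 1 + q with hpdef
  have hps : p < s := by rw [hpdef]; linarith
  have hp0 : 0 ≤ p := by rw [hpdef]; linarith
  -- the tail sequence
  set g : ℕ → ℝ := fun k => (m:ℝ) * cPAAPA m (k+i+1) / Ssum m i (k+i+2) ^ p with hgdef
  have hgsum : Summable g := gsummable hm hi hq hq1
  have hSpos : ∀ k : ℕ, 0 < Ssum m i (k+i+1) := fun k => Spos hm hi (by omega)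
  have hgnn : ∀ k, 0 ≤ g k := by
    intro k
    have hc := c_pos hm (show 2 ≤ k+i+1 by omega)
    have hS := Spos hm hi (show i < k+i+2 by omega)
    rw [hgdef]
    positivity
  set R : ℕ → ℝ := fun k => ∑' j, g (j + k) with hRdef
  have hRnn : ∀ k, 0 ≤ R k := fun k => tsum_nonneg fun j => hgnn _
  have hRrec : ∀ k, R k = g k + R (k+1) := by
    intro k
    have hsk : Summable fun j => g (j + k) := (summable_nat_add_iff k).2 hgsum
    calc R k = g (0 + k) + ∑' j, g (j + 1 + k) := hsk.tsum_eq_zero_add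
      _ = g k + R (k+1) := by
          congr 1
          · congr 1; omega
          · exact tsum_congr fun j => congrArg g (by omega)
  have hRtend : Tendsto R atTop (nhds 0) := tendsto_sum_nat_add g
  -- the filtration and the supermartingale
  set G : Filtration ℕ m0 :=
    ⟨fun k => ℱ (k+i+1), fun a b hab => ℱ.mono (by omega), fun k => ℱ.le _⟩ with hGdef
  set X : ℕ → Ω → ℝ := fun k ω => d (k+i+1) ω / Ssum m i (k+i+1) ^ p + R k with hXdef
  have hXmul : ∀ k, X k = fun ω => d (k+i+1) ω * (Ssum m i (k+i+1) ^ p)⁻¹ + R k := by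
    intro k
    funext ω
    rw [hXdef]
    dsimp only
    rw [div_eq_mul_inv]
  have hXadp : Adapted G X := by
    intro k
    rw [hXmul k]
    exact ((hadapted (k+i+1)).mul measurable_const).add measurable_const
  have hXint : ∀ k, Integrable (X k) μ := fun k =>
    ((hint (k+i+1)).div_const _).add (integrable_const _)
  have hXnn : ∀ k, 0 ≤ᵐ[μ] X k := by
    intro k
    filter_upwards [hnonneg (k+i+1)] with ω hω
    simp only [Pi.zero_apply] at hω ⊢
    have h1 : 0 ≤ d (k+i+1) ω / Ssum m i (k+i+1) ^ p :=
      div_nonneg hω (Real.rpow_nonneg (hSpos k).le _)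
    have h2 := hRnn k
    rw [hXdef]
    dsimp only
    linarith
  have hstep : ∀ k, μ[X (k+1)|G k] ≤ᵐ[μ] X k := by
    intro k
    show μ[X (k+1)|ℱ (k+i+1)] ≤ᵐ[μ] X k
    have hidx : (k+1)+i+1 = (k+i+1)+1 := by omega
    set b : ℝ := Ssum m i ((k+i+1)+1) with hbdef
    have hXk1 : X (k+1) = (b ^ p)⁻¹ • d ((k+i+1)+1) + fun _ => R (k+1) := by
      funext ω
      rw [hXdef]
      dsimp only [Pi.add_apply, Pi.smul_apply, smul_eq_mul]
      rw [hidx, div_eq_inv_mul, hbdef]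
    have h1 : μ[X (k+1)|ℱ (k+i+1)]
        =ᵐ[μ] (b ^ p)⁻¹ • μ[d ((k+i+1)+1)|ℱ (k+i+1)] + fun _ => R (k+1) := by
      rw [hXk1]
      refine (condExp_add ((hint _).smul _) (integrable_const _) _).trans ?_
      refine EventuallyEq.add (condExp_smul _ _ _) ?_
      rw [condExp_const (ℱ.le _)]
    have h2 := hcond (k+i+1) (by omega)
    filter_upwards [h1, h2, hnonneg (k+i+1)] with ω hω1 hω2 hω0
    have ha : 0 < Ssum m i (k+i+1) := hSpos k
    have hab : Ssum m i (k+i+1) ≤ b := Smono hm hi (by omega)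
    have hb0 : 0 < b := lt_of_lt_of_le ha hab
    have hSp : 0 < Ssum m i (k+i+1) ^ p := Real.rpow_pos_of_pos ha _
    have hbp : 0 < b ^ p := Real.rpow_pos_of_pos hb0 _
    have hinv : (b ^ p)⁻¹ ≤ (Ssum m i (k+i+1) ^ p)⁻¹ :=
      inv_anti₀ hSp (Real.rpow_le_rpow ha.le hab hp0)
    have he1 : ePAAPA m (k+i+1) ≤ 1 := e_le_one hm (by omega)
    have he0 : 0 ≤ ePAAPA m (k+i+1) := e_nonneg hm (by omega)
    have hgk : g k = (m:ℝ) * cPAAPA m (k+i+1) / b ^ p := rfl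
    have key : (b ^ p)⁻¹ * (d (k+i+1) ω * (1 - ePAAPA m (k+i+1)))
        ≤ d (k+i+1) ω * (Ssum m i (k+i+1) ^ p)⁻¹ := by
      calc (b ^ p)⁻¹ * (d (k+i+1) ω * (1 - ePAAPA m (k+i+1)))
          ≤ (b ^ p)⁻¹ * (d (k+i+1) ω * 1) := by
            apply mul_le_mul_of_nonneg_left ?_ (inv_pos.2 hbp).le
            apply mul_le_mul_of_nonneg_left (by linarith) hω0
        _ = d (k+i+1) ω * (b ^ p)⁻¹ := by ring
        _ ≤ d (k+i+1) ω * (Ssum m i (k+i+1) ^ p)⁻¹ :=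
            mul_le_mul_of_nonneg_left hinv hω0
    calc (μ[X (k+1)|ℱ (k+i+1)]) ω
        = (b ^ p)⁻¹ * (μ[d ((k+i+1)+1)|ℱ (k+i+1)]) ω + R (k+1) := by
          rw [hω1]; dsimp only [Pi.add_apply, Pi.smul_apply, smul_eq_mul]
      _ = (b ^ p)⁻¹ * (d (k+i+1) ω * (1 - ePAAPA m (k+i+1))
            + (m:ℝ) * cPAAPA m (k+i+1)) + R (k+1) := by rw [hω2]
      _ = (b ^ p)⁻¹ * (d (k+i+1) ω * (1 - ePAAPA m (k+i+1))) + (g k + R (k+1)) := by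
          rw [hgk, div_eq_mul_inv]; ring
      _ ≤ d (k+i+1) ω * (Ssum m i (k+i+1) ^ p)⁻¹ + R k := by
          rw [← hRrec k]; linarith
      _ = X k ω := by rw [hXdef]; dsimp only; rw [div_eq_mul_inv]
  have hXsuper : Supermartingale X G μ := supermartingale_nat (fun k => (hXadp k).stronglyMeasurable) hXint hstep
  -- L¹ boundedness
  have hImono : ∀ k, ∫ ω, X k ω ∂μ ≤ ∫ ω, X 0 ω ∂μ := by
    intro k
    have := hXsuper.setIntegral_le (Nat.zero_le k) MeasurableSet.univ
    simpa [setIntegral_univ] using this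
  have hbdd : ∀ k, eLpNorm (X k) 1 μ ≤ ENNReal.ofReal (∫ ω, X 0 ω ∂μ) := by
    intro k
    have h2 : eLpNorm (X k) 1 μ = ENNReal.ofReal (∫ ω, ‖X k ω‖ ∂μ) := by
      rw [eLpNorm_one_eq_lintegral_enorm, ← ofReal_integral_norm_eq_lintegral_enorm (hXint k)]
    rw [h2]
    apply ENNReal.ofReal_le_ofReal
    have h3 : ∫ ω, ‖X k ω‖ ∂μ = ∫ ω, X k ω ∂μ :=
      integral_congr_ae ((hXnn k).mono fun ω hω => Real.norm_of_nonneg hω)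
    rw [h3]; exact hImono k
  -- almost sure convergence of X
  have hconv : ∀ᵐ ω ∂μ, ∃ c, Tendsto (fun n => (-X) n ω) atTop (nhds c) := by
    refine hXsuper.neg.exists_ae_tendsto_of_bdd
      (R := (∫ ω, X 0 ω ∂μ).toNNReal) fun n => ?_
    have : eLpNorm ((-X) n) 1 μ = eLpNorm (X n) 1 μ := eLpNorm_neg _ _ _
    rw [this]
    exact (hbdd n).trans (by rw [ENNReal.ofReal])
  filter_upwards [hconv] with ω hω
  obtain ⟨c0, hc0⟩ := hω
  have hXlim : Tendsto (fun k => X k ω) atTop (nhds (-c0)) := by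
    have := hc0.neg
    simpa using this
  have hdlim : Tendsto (fun k => d (k+i+1) ω / Ssum m i (k+i+1) ^ p) atTop (nhds (-c0)) := by
    have h4 := hXlim.sub hRtend
    rw [sub_zero] at h4
    refine h4.congr fun k => ?_
    rw [hXdef]
    ring
  -- upgrade the exponent from p to s
  show Tendsto (fun t : ℕ => d t ω / Ssum m i t ^ s) atTop (nhds 0)
  rw [← tendsto_add_atTop_iff_nat (i+1)]
  have hSrtend : Tendsto (fun k : ℕ => Ssum m i (k+(i+1)) ^ (p - s)) atTop (nhds 0) := by
    have h4 : Tendsto (fun k : ℕ => Ssum m i (k+(i+1))) atTop atTop :=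
      (tendsto_add_atTop_iff_nat (i+1)).2 (Stop hm hi)
    have h5 := (tendsto_rpow_neg_atTop (show 0 < s - p by linarith)).comp h4
    simpa [Function.comp_def, neg_sub] using h5
  have heq : ∀ k : ℕ, d (k+(i+1)) ω / Ssum m i (k+(i+1)) ^ s
      = (d (k+(i+1)) ω / Ssum m i (k+(i+1)) ^ p) * Ssum m i (k+(i+1)) ^ (p - s) := by
    intro k
    have hS : 0 < Ssum m i (k+(i+1)) := hSpos k
    have hsp : Ssum m i (k+(i+1)) ^ (p-s)
        = Ssum m i (k+(i+1)) ^ p / Ssum m i (k+(i+1)) ^ s := Real.rpow_sub hS p s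
    rw [hsp]
    have h6 : Ssum m i (k+(i+1)) ^ p ≠ 0 := (Real.rpow_pos_of_pos hS p).ne'
    have h7 : Ssum m i (k+(i+1)) ^ s ≠ 0 := (Real.rpow_pos_of_pos hS s).ne'
    field_simp
  have h8 := hdlim.mul hSrtend
  rw [neg_mul, mul_zero, neg_zero] at h8
  exact Tendsto.congr (fun k => (heq k).symm) h8
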